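/- arXiv:1506.06383 — 2 statements merged into one kernel-verified Lean document; each statement's English description precedes it below -/
import Mathlib

section
/- Let d ≥ 2 and let ω ⊆ ℝ^d be an open set with H^{d-1}_∞(ω) < ∞. Then there exists a real-valued function Ω ∈ L^1(ℝ^d) such that I_1[Ω](x) ≥ 1 for every x ∈ ω and ‖Ω‖_{L^1} ≤ C·H^{d-1}_∞(ω), where C depends only on d. -/
open MeasureTheory Real Metric Set
open scoped FourierTransform ENNReal
noncomputable section

/-- The Riesz potential normalizing constant. -/
def rieszConst (d : ℕ) (a : ℝ) : ℝ :=
  Real.Gamma (((d : ℝ) - a) / 2) / (2 ^ a * Real.pi ^ ((d : ℝ) / 2) * Real.Gamma (a / 2))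

/-- The Riesz potential `I_a[f]`. -/
def rieszPotential (d : ℕ) (a : ℝ) (f : EuclideanSpace ℝ (Fin d) → ℝ)
    (x : EuclideanSpace ℝ (Fin d)) : ℝ :=
  rieszConst d a * ∫ y, f y * ‖x - y‖ ^ (a - (d : ℝ))

/-- `(-Δ)^{1/2}`, the Fourier multiplier with symbol `|ξ|`. -/
def halfLaplacian (d : ℕ) (φ : EuclideanSpace ℝ (Fin d) → ℝ)
    (x : EuclideanSpace ℝ (Fin d)) : ℝ :=
  (𝓕⁻ (fun ξ : EuclideanSpace ℝ (Fin d) => (‖ξ‖ : ℂ) * 𝓕 (fun y => (φ y : ℂ)) ξ) x).re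

/-- Hausdorff content of order `α` via coverings by closed balls. -/
def hausdorffContent (d : ℕ) (α : ℝ) (ω : Set (EuclideanSpace ℝ (Fin d))) : ℝ≥0∞ :=
  ⨅ (c : ℕ → EuclideanSpace ℝ (Fin d)) (r : ℕ → ℝ) (_ : ∀ j, 0 < r j)
    (_ : ω ⊆ ⋃ j, Metric.closedBall (c j) (r j)), ∑' j, ENNReal.ofReal (r j ^ α)

/-- The Laplacian. -/
def laplacian (d : ℕ) (f : EuclideanSpace ℝ (Fin d) → ℝ) (x : EuclideanSpace ℝ (Fin d)) : ℝ :=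
  ∑ i : Fin d, iteratedFDeriv ℝ 2 f x ![EuclideanSpace.single i 1, EuclideanSpace.single i 1]

/-- Fractional maximal function of order `a`. -/
def fracMaximal (d : ℕ) (a : ℝ) (f : EuclideanSpace ℝ (Fin d) → ℝ)
    (x : EuclideanSpace ℝ (Fin d)) : ℝ≥0∞ :=
  ⨆ (r : ℝ) (_ : 0 < r), ENNReal.ofReal (r ^ (a - (d : ℝ))) *
    ∫⁻ y in Metric.closedBall x r, ENNReal.ofReal |f y|

/-- BMO seminorm (as an extended real). -/
def bmoNorm (d : ℕ) (g : EuclideanSpace ℝ (Fin d) → ℝ) : ℝ≥0∞ :=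
  ⨆ (x : EuclideanSpace ℝ (Fin d)) (r : ℝ) (_ : 0 < r),
    ENNReal.ofReal (⨍ y in Metric.ball x r, |g y - ⨍ z in Metric.ball x r, g z|)

open Classical Filter Topology

private lemma kernel_lintegral_lt_top (d : ℕ) (hd : 2 ≤ d) (x : EuclideanSpace ℝ (Fin d))
    (R : ℝ) (hR : 0 < R) :
    ∫⁻ y in Metric.closedBall x R, ENNReal.ofReal ((‖x - y‖ ^ (d - 1))⁻¹) ∂volume < ⊤ := by
  haveI : NeZero d := ⟨by omega⟩
  set m := d - 1 with hm
  have hd1 : m + 1 = d := by omega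
  set V := volume (ball (0 : EuclideanSpace ℝ (Fin d)) 1) with hV
  have hVtop : V < ⊤ := measure_ball_lt_top
  set q : ℝ := 2⁻¹ with hq
  have hq0 : (0:ℝ) < q := by norm_num
  have hq1 : q < 1 := by norm_num
  set A : ℕ → Set (EuclideanSpace ℝ (Fin d)) :=
    fun k => closedBall x (R * q ^ k) \ closedBall x (R * q ^ (k + 1)) with hA
  have hsub : closedBall x R ⊆ {x} ∪ ⋃ k, A k := by
    intro y hy
    rcases eq_or_ne y x with h | h
    · exact Or.inl (by simp [h])
    · right
      have hdy : 0 < dist y x := dist_pos.mpr h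
      have hex : ∃ k : ℕ, R * q ^ (k + 1) < dist y x := by
        obtain ⟨n, hn⟩ := exists_pow_lt_of_lt_one (div_pos hdy hR) hq1
        have hn' : R * q ^ n < dist y x := by
          have := (lt_div_iff₀ hR).mp hn
          linarith
        refine ⟨n, lt_of_le_of_lt ?_ hn'⟩
        have : q ^ (n+1) ≤ q ^ n := pow_le_pow_of_le_one hq0.le hq1.le (by omega)
        nlinarith
      set k₀ := Nat.find hex with hk₀
      have hk₀spec : R * q ^ (k₀ + 1) < dist y x := Nat.find_spec hex
      have hupper : dist y x ≤ R * q ^ k₀ := by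
        rcases Nat.eq_zero_or_pos k₀ with h0 | h0
        · rw [h0]; simpa using hy
        · have h3 := Nat.find_min hex (m := k₀ - 1) (by omega)
          push_neg at h3
          have hkk : k₀ - 1 + 1 = k₀ := by omega
          rwa [hkk] at h3
      refine mem_iUnion.mpr ⟨k₀, mem_closedBall.mpr hupper, ?_⟩
      simp only [mem_closedBall, not_le]
      exact hk₀spec
  have hAk : ∀ k, (∫⁻ y in A k, ENNReal.ofReal ((‖x - y‖ ^ m)⁻¹) ∂volume)
      ≤ ENNReal.ofReal (R * 2 ^ m * q ^ k) * V := by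
    intro k
    have hb : ∀ y ∈ A k, ENNReal.ofReal ((‖x - y‖ ^ m)⁻¹)
        ≤ ENNReal.ofReal (((R * q ^ (k+1)) ^ m)⁻¹) := by
      intro y hy
      apply ENNReal.ofReal_le_ofReal
      have h1 : R * q ^ (k+1) < dist y x := by
        have := hy.2
        simpa [mem_closedBall, not_le] using this
      have h2 : ‖x - y‖ = dist y x := by rw [dist_comm, dist_eq_norm]
      have hpos : 0 < R * q ^ (k+1) := by positivity
      gcongr
      rw [h2]; exact h1.le
    have e1 : ((R * q ^ (k+1)) ^ m)⁻¹ * (R * q ^ k) ^ d = R * 2 ^ m * q ^ k := by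
      rw [← hd1, mul_pow, mul_pow, ← pow_mul, ← pow_mul,
        show (k+1)*m = k*m + m by ring, show k*(m+1) = k*m + k by ring,
        pow_add, pow_add, pow_succ]
      have hqm : q ^ m ≠ 0 := by positivity
      have hqkm : q ^ (k*m) ≠ 0 := by positivity
      have hRm : R ^ m ≠ 0 := by positivity
      have hkey : (2:ℝ) ^ m * q ^ m = 1 := by
        rw [hq, ← mul_pow]; norm_num
      field_simp
      linear_combination (-(q^k * q^(k*m))) * hkey
    calc ∫⁻ y in A k, ENNReal.ofReal ((‖x - y‖ ^ m)⁻¹) ∂volume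
        ≤ ∫⁻ _ in A k, ENNReal.ofReal (((R * q ^ (k+1)) ^ m)⁻¹) ∂volume :=
          setLIntegral_mono measurable_const hb
      _ = ENNReal.ofReal (((R * q ^ (k+1)) ^ m)⁻¹) * volume (A k) := setLIntegral_const _ _
      _ ≤ ENNReal.ofReal (((R * q ^ (k+1)) ^ m)⁻¹) * (ENNReal.ofReal ((R * q ^ k) ^ d) * V) := by
          gcongr
          have h4 : volume (A k) ≤ volume (closedBall x (R * q ^ k)) :=
            measure_mono diff_subset
          rw [Measure.addHaar_closedBall volume x (by positivity : (0:ℝ) ≤ R * q ^ k),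
            finrank_euclideanSpace_fin] at h4
          exact h4
      _ = ENNReal.ofReal (R * 2 ^ m * q ^ k) * V := by
          rw [← mul_assoc, ← ENNReal.ofReal_mul (by positivity), e1]
  have htotal : ∫⁻ y in closedBall x R, ENNReal.ofReal ((‖x - y‖ ^ m)⁻¹) ∂volume
      ≤ ∑' k, ENNReal.ofReal (R * 2 ^ m * q ^ k) * V := by
    calc ∫⁻ y in closedBall x R, ENNReal.ofReal ((‖x - y‖ ^ m)⁻¹) ∂volume
        ≤ ∫⁻ y in {x} ∪ ⋃ k, A k, ENNReal.ofReal ((‖x - y‖ ^ m)⁻¹) ∂volume :=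
          lintegral_mono_set hsub
      _ ≤ (∫⁻ y in {x}, ENNReal.ofReal ((‖x - y‖ ^ m)⁻¹) ∂volume)
          + ∫⁻ y in ⋃ k, A k, ENNReal.ofReal ((‖x - y‖ ^ m)⁻¹) ∂volume :=
          lintegral_union_le _ _ _
      _ ≤ 0 + ∑' k, ∫⁻ y in A k, ENNReal.ofReal ((‖x - y‖ ^ m)⁻¹) ∂volume := by
          gcongr
          · exact le_of_eq (setLIntegral_measure_zero _ _ (measure_singleton x))
          · exact lintegral_iUnion_le _ _
      _ ≤ 0 + ∑' k, ENNReal.ofReal (R * 2 ^ m * q ^ k) * V := by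
          gcongr with k
          exact hAk k
      _ = _ := by rw [zero_add]
  have hgeom : (∑' k : ℕ, ENNReal.ofReal (R * 2 ^ m * q ^ k) * V) < ⊤ := by
    have hsummable : Summable (fun k : ℕ => R * 2 ^ m * q ^ k) :=
      (summable_geometric_of_lt_one hq0.le hq1).mul_left _
    have h5 : (∑' k : ℕ, ENNReal.ofReal (R * 2 ^ m * q ^ k)) =
        ENNReal.ofReal (∑' k : ℕ, R * 2 ^ m * q ^ k) :=
      (ENNReal.ofReal_tsum_of_nonneg (fun k => by positivity) hsummable).symm
    rw [ENNReal.tsum_mul_right, h5]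
    exact ENNReal.mul_lt_top ENNReal.ofReal_lt_top hVtop
  exact lt_of_le_of_lt htotal hgeom

private lemma lower_bound_aux (d : ℕ) (hd : 2 ≤ d) (x z : EuclideanSpace ℝ (Fin d))
    (Ω : EuclideanSpace ℝ (Fin d) → ℝ) (hΩ0 : ∀ y, 0 ≤ Ω y)
    (hInt : Integrable (fun y => Ω y * (‖x - y‖ ^ (d - 1))⁻¹) volume)
    (N : Set (EuclideanSpace ℝ (Fin d))) (hN : volume N = 0)
    (R' β c₀ : ℝ) (hβ : 0 < β) (hc₀ : 0 ≤ c₀)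
    (hdist : ∀ y ∈ closedBall z R', ‖x - y‖ ≤ β)
    (hlow : ∀ y ∈ closedBall z R', y ∉ N → c₀ ≤ Ω y) :
    c₀ * (β ^ (d - 1))⁻¹ * (volume (closedBall z R')).toReal ≤
      ∫ y, Ω y * (‖x - y‖ ^ (d - 1))⁻¹ := by
  haveI : NeZero d := ⟨by omega⟩
  set f := fun y => Ω y * (‖x - y‖ ^ (d - 1))⁻¹ with hf
  have hf0 : ∀ y, 0 ≤ f y := fun y =>
    mul_nonneg (hΩ0 y) (inv_nonneg.mpr (pow_nonneg (norm_nonneg _) _))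
  have hae : ∀ᵐ y ∂(volume.restrict (closedBall z R')), c₀ * (β ^ (d - 1))⁻¹ ≤ f y := by
    have h1 : ∀ᵐ (y : EuclideanSpace ℝ (Fin d)) ∂volume, y ∉ N :=
      measure_eq_zero_iff_ae_notMem.mp hN
    have h2 : ∀ᵐ (y : EuclideanSpace ℝ (Fin d)) ∂volume, y ≠ x := by
      filter_upwards [measure_eq_zero_iff_ae_notMem.mp (measure_singleton x)] with y hy
      simpa using hy
    filter_upwards [ae_restrict_of_ae h1, ae_restrict_of_ae h2,
      ae_restrict_mem measurableSet_closedBall] with y h1' h2' hmem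
    have hnorm : 0 < ‖x - y‖ := by
      rw [norm_pos_iff]
      exact sub_ne_zero.mpr h2'.symm
    have hk : (β ^ (d - 1))⁻¹ ≤ (‖x - y‖ ^ (d - 1))⁻¹ := by
      gcongr
      exact hdist y hmem
    exact mul_le_mul (hlow y hmem h1') hk (by positivity) (hΩ0 y)
  calc c₀ * (β ^ (d - 1))⁻¹ * (volume (closedBall z R')).toReal
      = ∫ _ in closedBall z R', c₀ * (β ^ (d - 1))⁻¹ ∂volume := by
        rw [setIntegral_const, smul_eq_mul, mul_comm]; rfl
    _ ≤ ∫ y in closedBall z R', f y ∂volume :=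
        setIntegral_mono_ae_restrict
          ((integrableOn_const_iff).mpr (Or.inr measure_closedBall_lt_top)) hInt.integrableOn hae
    _ ≤ ∫ y, f y := setIntegral_le_integral hInt (Eventually.of_forall hf0)

private lemma eq_zero_of_forall_le_eps (a K : ℝ≥0∞) (hK : K ≠ ⊤)
    (h : ∀ ε : ℝ, 0 < ε → ε ≤ 1 → a ≤ ENNReal.ofReal ε * K) : a = 0 := by
  refine le_antisymm ?_ zero_le
  have htend : Tendsto (fun n : ℕ => ENNReal.ofReal (1/(n+1)) * K) atTop (𝓝 (0 * K)) := by
    apply ENNReal.Tendsto.mul_const _ (Or.inr hK)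
    rw [show (0:ℝ≥0∞) = ENNReal.ofReal 0 by simp]
    exact ENNReal.tendsto_ofReal tendsto_one_div_add_atTop_nhds_zero_nat
  rw [zero_mul] at htend
  refine ge_of_tendsto htend (Eventually.of_forall fun n => ?_)
  exact h (1/(n+1)) (by positivity)
    (by rw [div_le_one (by positivity)]; linarith [Nat.cast_nonneg (α := ℝ) n])

set_option maxHeartbeats 2000000 in
/-- for an open set `ω` of finite content, there is `Ω ∈ L^1` with
`I_1[Ω] ≥ 1` on `ω` and `‖Ω‖_{L^1} ≲ H^{d-1}_∞(ω)`. -/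
theorem dorronsoro_for_sets (d : ℕ) (hd : 2 ≤ d) :
    ∃ C : ℝ≥0∞, 0 < C ∧ C < ⊤ ∧ ∀ ω : Set (EuclideanSpace ℝ (Fin d)), IsOpen ω →
      hausdorffContent d ((d : ℝ) - 1) ω < ⊤ →
      ∃ Ω : EuclideanSpace ℝ (Fin d) → ℝ, Integrable Ω volume ∧
        (∀ x ∈ ω, 1 ≤ rieszPotential d 1 Ω x) ∧
        ENNReal.ofReal (∫ x, |Ω x|) ≤ C * hausdorffContent d ((d : ℝ) - 1) ω := by
  haveI : NeZero d := ⟨by omega⟩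
  set m := d - 1 with hm
  have hd1 : m + 1 = d := by omega
  have hmcast : ((m : ℕ) : ℝ) = (d : ℝ) - 1 := by
    rw [hm, Nat.cast_sub (by omega)]; norm_num
  have hpow : ∀ t : ℝ, t ^ d = t ^ m * t := fun t => by rw [← pow_succ, hd1]
  set A := rieszConst d 1 with hA
  have hApos : 0 < A := by
    rw [hA, rieszConst]
    apply div_pos
    · apply Real.Gamma_pos_of_pos
      have : (2:ℝ) ≤ d := by exact_mod_cast hd
      linarith
    · apply mul_pos (mul_pos _ _) (Real.Gamma_pos_of_pos (by norm_num))
      · exact Real.rpow_pos_of_pos two_pos 1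
      · exact Real.rpow_pos_of_pos Real.pi_pos _
  set V := volume (ball (0 : EuclideanSpace ℝ (Fin d)) 1) with hV
  have hVtop : V < ⊤ := measure_ball_lt_top
  have hVpos : 0 < V := measure_ball_pos _ _ one_pos
  set Vr := V.toReal with hVr
  have hVrpos : 0 < Vr := ENNReal.toReal_pos hVpos.ne' hVtop.ne
  set M := ((2:ℝ)^(d+1) + 5 * 3^d) / (A * Vr) with hM
  have hMpos : 0 < M := by positivity
  have hAMVr : A * M * Vr = (2:ℝ)^(d+1) + 5 * 3^d := by
    rw [hM]; field_simp
  refine ⟨2 * ENNReal.ofReal M * V, ?_, ?_, ?_⟩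
  · apply ENNReal.mul_pos (mul_ne_zero (by norm_num) _) hVpos.ne'
    simpa using (ENNReal.ofReal_pos.mpr hMpos).ne'
  · exact ENNReal.mul_lt_top (ENNReal.mul_lt_top (by norm_num) ENNReal.ofReal_lt_top) hVtop
  intro ω hω hfin
  by_cases hωe : ω = ∅
  · refine ⟨0, integrable_zero _ _ _, by simp [hωe], ?_⟩
    simp only [Pi.zero_apply, abs_zero, integral_zero, ENNReal.ofReal_zero]
    exact zero_le
  have hne : ω.Nonempty := nonempty_iff_ne_empty.2 hωe
  have hrw : ∀ (r : ℕ → ℝ), (∑' j, ENNReal.ofReal (r j ^ ((d:ℝ) - 1)))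
      = ∑' j, ENNReal.ofReal (r j ^ m) := by
    intro r
    refine tsum_congr fun j => ?_
    rw [← hmcast, Real.rpow_natCast]
  -- generic volume bound from a covering
  have hvolbound : ∀ (c : ℕ → EuclideanSpace ℝ (Fin d)) (r : ℕ → ℝ), (∀ j, 0 < r j) →
      ω ⊆ ⋃ j, closedBall (c j) (r j) →
      volume ω ≤ ∑' j, ENNReal.ofReal (r j ^ m * r j) * V := by
    intro c r hr hcov
    calc volume ω ≤ volume (⋃ j, closedBall (c j) (r j)) := measure_mono hcov
      _ ≤ ∑' j, volume (closedBall (c j) (r j)) := measure_iUnion_le _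
      _ = ∑' j, ENNReal.ofReal (r j ^ m * r j) * V := by
          refine tsum_congr fun j => ?_
          rw [Measure.addHaar_closedBall volume _ (hr j).le, finrank_euclideanSpace_fin,
            hpow (r j), hV]
  -- positivity of the content
  have hHpos : 0 < hausdorffContent d ((d:ℝ) - 1) ω := by
    rcases eq_or_ne (hausdorffContent d ((d:ℝ) - 1) ω) 0 with h0 | h0
    · exfalso
      have hvol0 : volume ω = 0 := by
        apply eq_zero_of_forall_le_eps _ V hVtop.ne
        intro ε hε hε1
        have hlt : hausdorffContent d ((d:ℝ) - 1) ω < ENNReal.ofReal ε := by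
          rw [h0]; exact ENNReal.ofReal_pos.mpr hε
        rw [hausdorffContent] at hlt
        obtain ⟨c, h1⟩ := iInf_lt_iff.mp hlt
        obtain ⟨r, h2⟩ := iInf_lt_iff.mp h1
        obtain ⟨hr, h3⟩ := iInf_lt_iff.mp h2
        obtain ⟨hcov, hsum⟩ := iInf_lt_iff.mp h3
        rw [hrw r] at hsum
        have hsum1 : (∑' j, ENNReal.ofReal (r j ^ m)) < ENNReal.ofReal 1 :=
          lt_of_lt_of_le hsum (ENNReal.ofReal_le_ofReal hε1)
        have hrle1 : ∀ j, r j ≤ 1 := by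
          intro j
          by_contra hj
          push_neg at hj
          have h4 : (1:ℝ) ≤ r j ^ m := by
            calc (1:ℝ) = 1 ^ m := (one_pow m).symm
              _ ≤ r j ^ m := pow_le_pow_left₀ (by norm_num) hj.le m
          have h5 : (1:ℝ≥0∞) ≤ ENNReal.ofReal (r j ^ m) := by
            rw [show (1:ℝ≥0∞) = ENNReal.ofReal 1 by simp]
            exact ENNReal.ofReal_le_ofReal h4
          have h6 : (1:ℝ≥0∞) ≤ ∑' j, ENNReal.ofReal (r j ^ m) :=
            h5.trans (ENNReal.le_tsum (f := fun j => ENNReal.ofReal (r j ^ m)) j)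
          have h7 : (∑' j, ENNReal.ofReal (r j ^ m)) < 1 := by
            simpa using hsum1
          exact absurd (lt_of_le_of_lt h6 h7) (lt_irrefl _)
        calc volume ω ≤ ∑' j, ENNReal.ofReal (r j ^ m * r j) * V := hvolbound c r hr hcov
          _ ≤ ∑' j, ENNReal.ofReal (r j ^ m) * V := by
              refine ENNReal.tsum_le_tsum fun j => ?_
              gcongr
              exact mul_le_of_le_one_right (pow_nonneg (hr j).le m) (hrle1 j)
          _ = (∑' j, ENNReal.ofReal (r j ^ m)) * V := ENNReal.tsum_mul_right
          _ ≤ ENNReal.ofReal ε * V := mul_le_mul_left hsum.le V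
      exact absurd hvol0 (hω.measure_pos volume hne).ne'
    · exact pos_iff_ne_zero.mpr h0
  -- choose a covering of cost at most twice the content
  have h2H : hausdorffContent d ((d:ℝ) - 1) ω < 2 * hausdorffContent d ((d:ℝ) - 1) ω := by
    rw [two_mul]
    exact ENNReal.lt_add_right hfin.ne hHpos.ne'
  rw [hausdorffContent] at h2H
  obtain ⟨c, h1⟩ := iInf_lt_iff.mp h2H
  obtain ⟨r, h2⟩ := iInf_lt_iff.mp h1
  obtain ⟨hr, h3⟩ := iInf_lt_iff.mp h2
  obtain ⟨hcov, hsum⟩ := iInf_lt_iff.mp h3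
  rw [hrw r] at hsum
  set S := ∑' j, ENNReal.ofReal (r j ^ m) with hS
  have hS2H : S ≤ 2 * hausdorffContent d ((d:ℝ) - 1) ω := hsum.le
  have hStop : S < ⊤ := lt_of_le_of_lt hS2H
    (ENNReal.mul_lt_top (by norm_num) hfin)
  have hSpos : 0 < S := by
    refine lt_of_lt_of_le ?_ (ENNReal.le_tsum 0)
    exact ENNReal.ofReal_pos.mpr (pow_pos (hr 0) m)
  -- the complement of ω is nonempty
  have hcne : ωᶜ.Nonempty := by
    rw [nonempty_compl]
    intro huniv
    have hvolfin : volume ω < ⊤ := by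
      set T := max 1 S.toReal with hT
      have hrT : ∀ j, r j ≤ T := by
        intro j
        have h4 : ENNReal.ofReal (r j ^ m) ≤ S := ENNReal.le_tsum j
        have h5 : r j ^ m ≤ S.toReal :=
          (ENNReal.ofReal_le_iff_le_toReal hStop.ne).mp h4
        rcases le_or_gt (r j) 1 with h6 | h6
        · exact h6.trans (le_max_left _ _)
        · have h7 : r j ≤ r j ^ m := le_self_pow₀ h6.le (by omega)
          exact le_trans (h7.trans h5) (le_max_right _ _)
      have := hvolbound c r hr hcov
      have hbound : volume ω ≤ ENNReal.ofReal T * S * V := by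
        refine le_trans this ?_
        calc ∑' j, ENNReal.ofReal (r j ^ m * r j) * V
            ≤ ∑' j, ENNReal.ofReal T * ENNReal.ofReal (r j ^ m) * V := by
              gcongr with j
              rw [← ENNReal.ofReal_mul (le_trans zero_le_one (le_max_left 1 S.toReal))]
              apply ENNReal.ofReal_le_ofReal
              calc r j ^ m * r j ≤ r j ^ m * T := by
                    have := hrT j
                    nlinarith [pow_nonneg (hr j).le m]
                _ = T * r j ^ m := mul_comm _ _
          _ = ENNReal.ofReal T * S * V := by
              rw [hS, mul_assoc, ← ENNReal.tsum_mul_right, ← ENNReal.tsum_mul_left]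
              exact tsum_congr fun j => by ring
      exact lt_of_le_of_lt hbound
        (ENNReal.mul_lt_top (ENNReal.mul_lt_top ENNReal.ofReal_lt_top hStop) hVtop)
    rw [huniv] at hvolfin
    haveI : Nontrivial (EuclideanSpace ℝ (Fin d)) := inferInstance
    rw [MeasureTheory.measure_univ_of_isAddLeftInvariant volume] at hvolfin
    exact absurd hvolfin (lt_irrefl _)
  -- the construction
  set ρ : EuclideanSpace ℝ (Fin d) → ℝ≥0∞ :=
    fun y => ⨅ j : ℕ, (if y ∈ closedBall (c j) (r j) then ENNReal.ofReal (r j) else ⊤) with hρ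
  set D : EuclideanSpace ℝ (Fin d) → ℝ≥0∞ :=
    fun y => max (ρ y) (ENNReal.ofReal (infDist y ωᶜ)) with hD
  set Ω : EuclideanSpace ℝ (Fin d) → ℝ :=
    fun y => (ENNReal.ofReal M / D y).toReal with hΩ
  have mρ : Measurable ρ := by
    apply Measurable.iInf
    intro j
    exact Measurable.ite measurableSet_closedBall measurable_const measurable_const
  have mD : Measurable D :=
    mρ.max (ENNReal.measurable_ofReal.comp (continuous_infDist_pt _).measurable)
  have mΩ : Measurable Ω := ENNReal.measurable_toReal.comp (measurable_const.div mD)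
  have hΩ0 : ∀ y, 0 ≤ Ω y := fun y => ENNReal.toReal_nonneg
  -- L¹ bound
  have hlin : (∫⁻ y, ENNReal.ofReal (Ω y) ∂volume) ≤ ENNReal.ofReal M * V * S := by
    have step1 : ∀ y, ENNReal.ofReal (Ω y) ≤
        ∑' j, Set.indicator (closedBall (c j) (r j))
          (fun _ => ENNReal.ofReal M / ENNReal.ofReal (r j)) y := by
      intro y
      refine le_trans ENNReal.ofReal_toReal_le ?_
      have hDge : ρ y ≤ D y := le_max_left _ _
      refine le_trans (ENNReal.div_le_div_left hDge _) ?_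
      rw [div_eq_mul_inv, hρ]
      simp only
      rw [ENNReal.inv_iInf, ENNReal.mul_iSup]
      refine iSup_le fun j => ?_
      rcases Classical.em (y ∈ closedBall (c j) (r j)) with hmem | hmem
      · refine le_trans (le_of_eq ?_) (ENNReal.le_tsum j)
        rw [Set.indicator_of_mem hmem, if_pos hmem, div_eq_mul_inv]
      · rw [if_neg hmem]
        simp
    calc (∫⁻ y, ENNReal.ofReal (Ω y) ∂volume)
        ≤ ∫⁻ y, ∑' j, Set.indicator (closedBall (c j) (r j))
            (fun _ => ENNReal.ofReal M / ENNReal.ofReal (r j)) y ∂volume :=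
          lintegral_mono step1
      _ = ∑' j, ∫⁻ y, Set.indicator (closedBall (c j) (r j))
            (fun _ => ENNReal.ofReal M / ENNReal.ofReal (r j)) y ∂volume :=
          lintegral_tsum fun j => (measurable_const.indicator measurableSet_closedBall).aemeasurable
      _ = ∑' j, ENNReal.ofReal M / ENNReal.ofReal (r j) * volume (closedBall (c j) (r j)) := by
          refine tsum_congr fun j => ?_
          rw [lintegral_indicator measurableSet_closedBall, setLIntegral_const]
      _ = ∑' j, ENNReal.ofReal M * ENNReal.ofReal (r j ^ m) * V := by
          refine tsum_congr fun j => ?_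
          rw [Measure.addHaar_closedBall volume _ (hr j).le, finrank_euclideanSpace_fin,
            hpow (r j), ENNReal.ofReal_mul (pow_nonneg (hr j).le m), hV]
          rw [div_eq_mul_inv]
          have hrne : ENNReal.ofReal (r j) ≠ 0 := (ENNReal.ofReal_pos.mpr (hr j)).ne'
          have hrnetop : ENNReal.ofReal (r j) ≠ ⊤ := ENNReal.ofReal_ne_top
          calc ENNReal.ofReal M * (ENNReal.ofReal (r j))⁻¹ *
                (ENNReal.ofReal (r j ^ m) * ENNReal.ofReal (r j) * V)
              = ENNReal.ofReal M * ENNReal.ofReal (r j ^ m) * V *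
                ((ENNReal.ofReal (r j))⁻¹ * ENNReal.ofReal (r j)) := by ring
            _ = ENNReal.ofReal M * ENNReal.ofReal (r j ^ m) * V := by
                rw [ENNReal.inv_mul_cancel hrne hrnetop, mul_one]
      _ = ENNReal.ofReal M * V * S := by
          rw [hS, ← ENNReal.tsum_mul_left]
          refine tsum_congr fun j => by ring
  have hlintop : (∫⁻ y, ENNReal.ofReal (Ω y) ∂volume) < ⊤ :=
    lt_of_le_of_lt hlin (ENNReal.mul_lt_top
      (ENNReal.mul_lt_top ENNReal.ofReal_lt_top hVtop) hStop)
  have hΩint : Integrable Ω volume := by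
    refine ⟨mΩ.aestronglyMeasurable, ?_⟩
    rw [hasFiniteIntegral_iff_norm]
    have hfun : (fun y => ENNReal.ofReal ‖Ω y‖) = fun y => ENNReal.ofReal (Ω y) :=
      funext fun y => by rw [Real.norm_eq_abs, abs_of_nonneg (hΩ0 y)]
    rw [hfun]
    exact hlintop
  -- the exceptional null set
  set N := {y | ρ y = 0} with hN
  have hNnull : volume N = 0 := by
    apply eq_zero_of_forall_le_eps _ (S * V) (ENNReal.mul_lt_top hStop hVtop).ne
    intro ε hε hε1
    have hsub : N ⊆ ⋃ j, (if r j < ε then closedBall (c j) (r j) else (∅ : Set _)) := by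
      intro y hy
      have hy0 : ρ y < ENNReal.ofReal ε := by
        have : ρ y = 0 := hy
        rw [this]
        exact ENNReal.ofReal_pos.mpr hε
      rw [hρ] at hy0
      obtain ⟨j, hj⟩ := iInf_lt_iff.mp hy0
      rcases Classical.em (y ∈ closedBall (c j) (r j)) with hmem | hmem
      · rw [if_pos hmem] at hj
        have hrj : r j < ε := by
          have := (ENNReal.ofReal_lt_ofReal_iff hε).mp hj
          exact this
        refine mem_iUnion.mpr ⟨j, ?_⟩
        rw [if_pos hrj]
        exact hmem
      · rw [if_neg hmem] at hj
        exact absurd hj (not_top_lt)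
    calc volume N ≤ ∑' j, volume (if r j < ε then closedBall (c j) (r j) else (∅ : Set _)) :=
          le_trans (measure_mono hsub) (measure_iUnion_le _)
      _ ≤ ∑' j, ENNReal.ofReal ε * (ENNReal.ofReal (r j ^ m) * V) := by
          gcongr with j
          rcases Classical.em (r j < ε) with hrj | hrj
          · rw [if_pos hrj, Measure.addHaar_closedBall volume _ (hr j).le,
              finrank_euclideanSpace_fin, hpow (r j), hV]
            rw [← mul_assoc, ← ENNReal.ofReal_mul hε.le]
            apply mul_le_mul_left
            apply ENNReal.ofReal_le_ofReal
            nlinarith [pow_nonneg (hr j).le m, (hr j).le]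
          · rw [if_neg hrj]
            simp
      _ = ENNReal.ofReal ε * (S * V) := by
          rw [hS, ← ENNReal.tsum_mul_right, ← ENNReal.tsum_mul_left]
  -- pointwise lower bound on Ω on controlled regions
  have hΩlow : ∀ (y : EuclideanSpace ℝ (Fin d)) (γ : ℝ), 0 < γ →
      D y ≤ ENNReal.ofReal γ → y ∉ N → M / γ ≤ Ω y := by
    intro y γ hγ hDγ hyN
    have hρ0 : ρ y ≠ 0 := hyN
    have hD0 : D y ≠ 0 := by
      intro h0
      exact hρ0 (le_antisymm (h0 ▸ le_max_left _ _) zero_le)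
    have hfin' : ENNReal.ofReal M / D y ≠ ⊤ :=
      (ENNReal.div_lt_top ENNReal.ofReal_ne_top hD0).ne
    have h1 : ENNReal.ofReal (M / γ) ≤ ENNReal.ofReal M / D y := by
      rw [ENNReal.ofReal_div_of_pos hγ]
      exact ENNReal.div_le_div_left hDγ _
    have := ENNReal.toReal_mono hfin' h1
    rwa [ENNReal.toReal_ofReal (by positivity)] at this
  refine ⟨Ω, hΩint, ?_, ?_⟩
  · -- pointwise lower bound for the Riesz potential
    intro x hx
    set δ := infDist x ωᶜ with hδ
    have hδpos : 0 < δ := by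
      rw [hδ]
      refine (IsClosed.notMem_iff_infDist_pos hω.isClosed_compl hcne).mp ?_
      simp [hx]
    set u := δ / 2 with hu
    have hupos : 0 < u := by positivity
    -- distance control
    have hdistle : ∀ y : EuclideanSpace ℝ (Fin d), infDist y ωᶜ ≤ δ + dist x y := by
      intro y
      calc infDist y ωᶜ ≤ infDist x ωᶜ + dist y x := infDist_le_infDist_add_dist
        _ = δ + dist x y := by rw [dist_comm]
    -- membership of the small ball in ω
    have hWsub : closedBall x u ⊆ ω := by
      intro y hy
      by_contra hyω
      have h4 : δ ≤ dist x y := infDist_le_dist_of_mem hyω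
      have h5 : dist x y ≤ u := by rwa [mem_closedBall, dist_comm] at hy
      rw [hu] at h5
      linarith
    -- rewrite the kernel
    have hker : ∀ y : EuclideanSpace ℝ (Fin d),
        ‖x - y‖ ^ ((1:ℝ) - (d:ℝ)) = (‖x - y‖ ^ m)⁻¹ := by
      intro y
      have hexp : (1:ℝ) - (d:ℝ) = -(m:ℝ) := by rw [hmcast]; ring
      rw [hexp, Real.rpow_neg (norm_nonneg _), Real.rpow_natCast]
    -- global integrability of the Riesz integrand at x
    have hInt : Integrable (fun y => Ω y * (‖x - y‖ ^ m)⁻¹) volume := by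
      have hmeasf : Measurable (fun y => Ω y * (‖x - y‖ ^ m)⁻¹) :=
        mΩ.mul (((continuous_const.sub continuous_id).norm.pow m).measurable).inv
      have hΩbdd : ∀ y ∈ closedBall x u, Ω y ≤ M / u := by
        intro y hy
        have h4 : u ≤ infDist y ωᶜ := by
          have h5 : δ ≤ infDist y ωᶜ + dist x y := by
            rw [hδ]
            exact infDist_le_infDist_add_dist
          have h6 : dist x y ≤ u := by rwa [mem_closedBall, dist_comm] at hy
          rw [hu] at h6 ⊢
          linarith
        have h7 : ENNReal.ofReal u ≤ D y :=
          le_trans (ENNReal.ofReal_le_ofReal h4) (le_max_right _ _)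
        have h8 : ENNReal.ofReal M / D y ≤ ENNReal.ofReal M / ENNReal.ofReal u :=
          ENNReal.div_le_div_left h7 _
        have h9 : ENNReal.ofReal M / ENNReal.ofReal u = ENNReal.ofReal (M / u) :=
          (ENNReal.ofReal_div_of_pos hupos).symm
        rw [h9] at h8
        have := ENNReal.toReal_mono ENNReal.ofReal_ne_top h8
        rwa [ENNReal.toReal_ofReal (by positivity)] at this
      have hnear : IntegrableOn (fun y => Ω y * (‖x - y‖ ^ m)⁻¹) (closedBall x u) volume := by
        have hkint : IntegrableOn (fun y => (‖x - y‖ ^ m)⁻¹) (closedBall x u) volume := by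
          constructor
          · exact ((((continuous_const.sub continuous_id).norm.pow m).measurable).inv).aestronglyMeasurable
          · rw [hasFiniteIntegral_iff_norm]
            have hfun : (fun y => ENNReal.ofReal ‖(‖x - y‖ ^ m)⁻¹‖)
                = fun y => ENNReal.ofReal ((‖x - y‖ ^ m)⁻¹) :=
              funext fun y => by
                rw [Real.norm_eq_abs, abs_of_nonneg (inv_nonneg.mpr (pow_nonneg (norm_nonneg _) m))]
            rw [hfun]
            have hk := kernel_lintegral_lt_top d hd x u hupos
            rw [← hm] at hk
            exact hk
        refine Integrable.mono' (hkint.const_mul (M / u)) hmeasf.aestronglyMeasurable.restrict ?_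
        filter_upwards [ae_restrict_mem measurableSet_closedBall] with y hy
        rw [Real.norm_eq_abs, abs_of_nonneg (mul_nonneg (hΩ0 y) (by positivity))]
        exact mul_le_mul_of_nonneg_right (hΩbdd y hy) (by positivity)
      have hfar : IntegrableOn (fun y => Ω y * (‖x - y‖ ^ m)⁻¹) (closedBall x u)ᶜ volume := by
        refine Integrable.mono' ((hΩint.restrict).mul_const ((u ^ m)⁻¹))
          hmeasf.aestronglyMeasurable.restrict ?_
        filter_upwards [ae_restrict_mem measurableSet_closedBall.compl] with y hy
        rw [Real.norm_eq_abs, abs_of_nonneg (mul_nonneg (hΩ0 y) (by positivity))]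
        have h4 : u ≤ ‖x - y‖ := by
          have : ¬ dist y x ≤ u := by simpa [mem_closedBall] using hy
          push_neg at this
          rw [show ‖x - y‖ = dist y x by rw [dist_comm, dist_eq_norm]]
          exact this.le
        have h5 : (‖x - y‖ ^ m)⁻¹ ≤ (u ^ m)⁻¹ := by
          gcongr
        calc Ω y * (‖x - y‖ ^ m)⁻¹ ≤ Ω y * (u ^ m)⁻¹ :=
              mul_le_mul_of_nonneg_left h5 (hΩ0 y)
          _ ≤ Ω y * (u ^ m)⁻¹ := le_refl _
      have := integrableOn_union.mpr ⟨hnear, hfar⟩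
      rwa [Set.union_compl_self, integrableOn_univ] at this
    -- the two cases
    have hmain : ∃ b : ℝ, 1 ≤ A * b ∧
        b ≤ ∫ y, Ω y * (‖x - y‖ ^ m)⁻¹ := by
      rcases Classical.em (∃ i, u < r i ∧ (closedBall (c i) (r i) ∩ closedBall x u).Nonempty)
        with ⟨i, hbig, ⟨y₀, hy₀i, hy₀W⟩⟩ | hP
      · -- case B1 : a big ball meets the small ball around x
        set R := r i with hR
        have hRpos : 0 < R := hr i
        have huR : u < R := hbig
        have hdist1 : ∀ y ∈ closedBall (c i) R, ‖x - y‖ ≤ 3 * R := by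
          intro y hy
          have h4 : dist x y ≤ dist x y₀ + dist y₀ (c i) + dist (c i) y := dist_triangle4 _ _ _ _
          have h5 : dist x y₀ ≤ u := by rwa [mem_closedBall, dist_comm] at hy₀W
          have h6 : dist y₀ (c i) ≤ R := by rwa [mem_closedBall] at hy₀i
          have h7 : dist (c i) y ≤ R := by rwa [mem_closedBall, dist_comm] at hy
          rw [← dist_eq_norm]
          linarith
        have hlow1 : ∀ y ∈ closedBall (c i) R, y ∉ N → M / (5 * R) ≤ Ω y := by
          intro y hy hyN
          refine hΩlow y (5 * R) (by positivity) ?_ hyN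
          rw [hD]
          simp only [max_le_iff]
          constructor
          · rw [hρ]
            refine le_trans (iInf_le _ i) ?_
            rw [if_pos hy]
            exact ENNReal.ofReal_le_ofReal (by linarith)
          · apply ENNReal.ofReal_le_ofReal
            have h4 := hdistle y
            have h5 : dist x y ≤ 3 * R := by
              rw [dist_eq_norm]
              exact hdist1 y hy
            have h6 : δ ≤ 2 * R := by
              rw [hu] at huR
              linarith
            linarith
        have hbound := lower_bound_aux d hd x (c i) Ω hΩ0 hInt N hNnull R (3 * R)
          (M / (5 * R)) (by positivity) (by positivity) hdist1 hlow1
        rw [← hm] at hbound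
        refine ⟨_, ?_, hbound⟩
        -- numeric verification
        rw [Measure.addHaar_closedBall volume _ hRpos.le, finrank_euclideanSpace_fin,
          ENNReal.toReal_mul, ENNReal.toReal_ofReal (pow_nonneg hRpos.le d), ← hV, ← hVr]
        have hexp : M / (5 * R) * ((3 * R) ^ m)⁻¹ * (R ^ d * Vr)
            = A⁻¹ * (((2:ℝ)^(d+1) + 5 * 3^d) / (5 * 3 ^ m)) := by
          have h3m : ((3:ℝ) * R) ^ m = 3 ^ m * R ^ m := mul_pow _ _ _
          rw [h3m, hpow R]
          have hAne : A ≠ 0 := hApos.ne'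
          have hVne : Vr ≠ 0 := hVrpos.ne'
          have hRne : R ≠ 0 := hRpos.ne'
          have h3ne : (3:ℝ) ^ m ≠ 0 := by positivity
          have hRmne : R ^ m ≠ 0 := by positivity
          rw [hM]
          field_simp
        rw [hexp, ← mul_assoc, mul_inv_cancel₀ hApos.ne', one_mul,
          le_div_iff₀ (by positivity)]
        have h8 : (3:ℝ)^m ≤ 3^d := pow_le_pow_right₀ (by norm_num) (by omega)
        have h9 : (0:ℝ) < 2^(d+1) := by positivity
        linarith
      · -- case B2 : all balls meeting the small ball are small
        push_neg at hP
        have hlow2 : ∀ y ∈ closedBall x u, y ∉ N → M / (3 * u) ≤ Ω y := by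
          intro y hy hyN
          refine hΩlow y (3 * u) (by positivity) ?_ hyN
          have hyω : y ∈ ω := hWsub hy
          obtain ⟨j, hyBj⟩ := mem_iUnion.mp (hcov hyω)
          have hrj : r j ≤ u := by
            by_contra hj
            push_neg at hj
            have h7 := hP j hj
            exact absurd (h7 ▸ mem_inter hyBj hy) (notMem_empty y)
          rw [hD]
          simp only [max_le_iff]
          constructor
          · rw [hρ]
            refine le_trans (iInf_le _ j) ?_
            rw [if_pos hyBj]
            exact ENNReal.ofReal_le_ofReal (by linarith)
          · apply ENNReal.ofReal_le_ofReal
            have h4 := hdistle y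
            have h5 : dist x y ≤ u := by rwa [mem_closedBall, dist_comm] at hy
            have h6 : δ = 2 * u := by rw [hu]; ring
            linarith
        have hdist2 : ∀ y ∈ closedBall x u, ‖x - y‖ ≤ u := by
          intro y hy
          rw [← dist_eq_norm]
          rwa [mem_closedBall, dist_comm] at hy
        have hbound := lower_bound_aux d hd x x Ω hΩ0 hInt N hNnull u u
          (M / (3 * u)) hupos (by positivity) hdist2 hlow2
        rw [← hm] at hbound
        refine ⟨_, ?_, hbound⟩
        rw [Measure.addHaar_closedBall volume _ hupos.le, finrank_euclideanSpace_fin,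
          ENNReal.toReal_mul, ENNReal.toReal_ofReal (pow_nonneg hupos.le d), ← hV, ← hVr]
        have hexp : M / (3 * u) * (u ^ m)⁻¹ * (u ^ d * Vr)
            = A⁻¹ * (((2:ℝ)^(d+1) + 5 * 3^d) / 3) := by
          rw [hpow u]
          have hune : u ≠ 0 := hupos.ne'
          have humne : u ^ m ≠ 0 := by positivity
          rw [hM]
          field_simp
        rw [hexp, ← mul_assoc, mul_inv_cancel₀ hApos.ne', one_mul]
        rw [le_div_iff₀ (by norm_num)]
        have h9 : (0:ℝ) < 2 ^ (d+1) := by positivity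
        have h10 : (1:ℝ) ≤ 3 ^ d := by
          calc (1:ℝ) = 1 ^ d := (one_pow d).symm
            _ ≤ 3 ^ d := by gcongr <;> norm_num
        linarith
    obtain ⟨b, hb1, hb2⟩ := hmain
    rw [rieszPotential]
    have hi : ∫ y, Ω y * ‖x - y‖ ^ ((1:ℝ) - (d:ℝ)) = ∫ y, Ω y * (‖x - y‖ ^ m)⁻¹ := by
      congr 1
      funext y
      rw [hker y]
    calc (1:ℝ) ≤ A * b := hb1
      _ ≤ A * ∫ y, Ω y * (‖x - y‖ ^ m)⁻¹ := by
          exact mul_le_mul_of_nonneg_left hb2 hApos.le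
      _ = rieszConst d 1 * ∫ y, Ω y * ‖x - y‖ ^ (1 - (d:ℝ)) := by
          rw [hi, hA]
  · -- the L¹ norm estimate
    have habs : (∫ y, |Ω y|) = ∫ y, Ω y := by
      congr 1
      funext y
      exact abs_of_nonneg (hΩ0 y)
    rw [habs]
    rw [MeasureTheory.ofReal_integral_eq_lintegral_ofReal hΩint
      (Eventually.of_forall hΩ0)]
    calc (∫⁻ y, ENNReal.ofReal (Ω y) ∂volume) ≤ ENNReal.ofReal M * V * S := hlin
      _ ≤ ENNReal.ofReal M * V * (2 * hausdorffContent d ((d:ℝ) - 1) ω) := by gcongr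
      _ = 2 * ENNReal.ofReal M * V * hausdorffContent d ((d:ℝ) - 1) ω := by ring
end
end

section
/- Minimax for bilinear pairings: let X be a convex compact subset of a topological vector space and Y a convex subset of a topological vector space, and let L : X × Y → ℝ be continuous, convex in the first variable and concave in the second. Then min_{x∈X} sup_{y∈Y} L(x,y) = sup_{y∈Y} min_{x∈X} L(x,y) (values in ℝ ∪ {+∞}). -/
open MeasureTheory Real Metric Set
open scoped FourierTransform ENNReal
noncomputable section

private lemma kyfan_finite {E F : Type*} [AddCommGroup E] [Module ℝ E]
    [AddCommGroup F] [Module ℝ F]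
    (X : Set E) (Y : Set F) (hX : Convex ℝ X) (hXne : X.Nonempty) (hY : Convex ℝ Y)
    (L : E → F → ℝ)
    (hconv : ∀ y ∈ Y, ConvexOn ℝ X (fun x => L x y))
    (hconc : ∀ x ∈ X, ConcaveOn ℝ Y (fun y => L x y))
    (s : Finset F) (hs : ∀ y ∈ s, y ∈ Y) (c : ℝ)
    (H : ∀ x ∈ X, ∃ y ∈ s, c < L x y) :
    ∃ y ∈ Y, ∀ x ∈ X, c ≤ L x y := by
  classical
  obtain ⟨x0, hx0⟩ := hXne
  set ι := {y // y ∈ s}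
  set K : Set (ι → ℝ) := {z | ∃ x ∈ X, ∀ i : ι, L x i.1 ≤ z i} with hK
  set C : Set (ι → ℝ) := {z | ∀ i : ι, z i < c} with hC
  have hCopen : IsOpen C := by
    have : C = Set.pi Set.univ (fun _ : ι => Iio c) := by
      ext z; simp [hC, Set.mem_pi]
    rw [this]
    exact isOpen_set_pi Set.finite_univ (fun i _ => isOpen_Iio)
  have hCconv : Convex ℝ C := by
    have : C = Set.pi Set.univ (fun _ : ι => Iio c) := by
      ext z; simp [hC, Set.mem_pi]
    rw [this]
    exact convex_pi (fun i _ => convex_Iio c)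
  have hKconv : Convex ℝ K := by
    rintro z ⟨x1, hx1, hz⟩ w ⟨x2, hx2, hw⟩ a b ha hb hab
    refine ⟨a • x1 + b • x2, hX hx1 hx2 ha hb hab, fun i => ?_⟩
    have := (hconv i.1 (hs i.1 i.2)).2 hx1 hx2 ha hb hab
    simp only [smul_eq_mul] at this ⊢
    calc L (a • x1 + b • x2) i.1 ≤ a * L x1 i.1 + b * L x2 i.1 := this
      _ ≤ a * z i + b * w i := by
          gcongr <;> [exact hz i; exact hw i]
    
  have hdisj : Disjoint C K := by
    rw [Set.disjoint_left]
    rintro z hzC ⟨x, hx, hzK⟩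
    obtain ⟨y, hy, hcy⟩ := H x hx
    exact absurd ((hzK ⟨y, hy⟩).trans_lt (hzC ⟨y, hy⟩)) (not_lt.mpr hcy.le)
  obtain ⟨f, u, hfC, hfK⟩ := geometric_hahn_banach_open hCconv hCopen hKconv hdisj
  set lam : ι → ℝ := fun i => f (Pi.single i 1) with hlam
  have hf_eq : ∀ z : ι → ℝ, f z = ∑ i : ι, z i * lam i := by
    intro z
    conv_lhs => rw [pi_eq_sum_univ z, map_sum]
    refine Finset.sum_congr rfl fun i _ => ?_
    have h1 : (fun j => if i = j then (1:ℝ) else 0) = Pi.single i 1 := by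
      funext j; simp [Pi.single_apply, eq_comm]
    rw [h1, _root_.map_smul, smul_eq_mul]
  set z0 : ι → ℝ := fun i => L x0 i.1 with hz0
  have hz0K : z0 ∈ K := ⟨x0, hx0, fun i => le_rfl⟩
  have hlam_nonneg : ∀ i, 0 ≤ lam i := by
    intro i
    by_contra hneg
    push_neg at hneg
    set t : ℝ := (f z0 - u + 1) / (-lam i) with ht
    have htpos : 0 < t := by
      apply div_pos _ (by linarith)
      have := hfK z0 hz0K
      linarith
    have hmem : z0 + t • (Pi.single i 1 : ι → ℝ) ∈ K := by
      refine ⟨x0, hx0, fun j => ?_⟩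
      have : (0:ℝ) ≤ t * (Pi.single i 1 : ι → ℝ) j := by
        apply mul_nonneg htpos.le
        rcases eq_or_ne j i with rfl | hji
        · simp
        · simp [Pi.single_apply, hji]
      simp only [Pi.add_apply, Pi.smul_apply, smul_eq_mul]
      linarith [le_refl (z0 j)]
    have h4 := hfK _ hmem
    rw [map_add, _root_.map_smul, smul_eq_mul] at h4
    have h5 : u ≤ f z0 + t * lam i := h4
    have htl : t * lam i = -(f z0 - u + 1) := by
      have hne : -lam i ≠ 0 := by intro h; exact hneg.ne (by linarith)
      have h6 := div_mul_cancel₀ (f z0 - u + 1) hne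
      rw [← ht, mul_neg] at h6
      linarith
    linarith
  set S : ℝ := ∑ i : ι, lam i with hS
  have hS0 : 0 ≤ S := Finset.sum_nonneg fun i _ => hlam_nonneg i
  have hcu : ∀ c' : ℝ, c' < c → S * c' < u := by
    intro c' hc'
    have hmem : (fun _ : ι => c') ∈ C := fun i => hc'
    have := hfC _ hmem
    rw [hf_eq] at this
    calc S * c' = ∑ i : ι, c' * lam i := by
          rw [hS, Finset.sum_mul]; exact Finset.sum_congr rfl fun i _ => mul_comm _ _
      _ < u := this
  have hu_pos : 0 < u → True := fun _ => trivial
  have hSpos : 0 < S := by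
    rcases hS0.eq_or_lt with h | h
    · exfalso
      have hall : ∀ i ∈ Finset.univ, lam i = 0 :=
        (Finset.sum_eq_zero_iff_of_nonneg fun i _ => hlam_nonneg i).mp h.symm
      have h1 : f z0 = 0 := by
        rw [hf_eq]
        exact Finset.sum_eq_zero fun i hi => by rw [hall i hi, mul_zero]
      have h2 := hfK z0 hz0K
      have h3 := hcu (c - 1) (by linarith)
      rw [← h, zero_mul] at h3
      linarith
    · exact h
  have hScu : S * c ≤ u := by
    by_contra h
    push_neg at h
    have h1 := hcu (u / S) ((div_lt_iff₀ hSpos).mpr (by linarith [mul_comm S c]))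
    rw [mul_div_cancel₀ u hSpos.ne'] at h1
    exact lt_irrefl u h1
  set w : ι → ℝ := fun i => lam i / S with hw
  have hw_nonneg : ∀ i ∈ Finset.univ, 0 ≤ w i := fun i _ => div_nonneg (hlam_nonneg i) hS0
  have hw_sum : ∑ i : ι, w i = 1 := by
    rw [hw, ← Finset.sum_div, ← hS, div_self hSpos.ne']
  refine ⟨∑ i : ι, w i • i.1, hY.sum_mem hw_nonneg hw_sum (fun i _ => hs i.1 i.2), ?_⟩
  intro x hx
  have h1 : u ≤ f (fun i => L x i.1) := hfK _ ⟨x, hx, fun i => le_rfl⟩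
  rw [hf_eq] at h1
  have h2 : S * c ≤ ∑ i : ι, L x i.1 * lam i := hScu.trans h1
  have hj := (hconc x hx).le_map_sum hw_nonneg hw_sum (fun i _ => hs i.1 i.2)
  have h3 : c ≤ ∑ i : ι, w i • L x i.1 := by
    have hsum : ∑ i : ι, w i • L x i.1 = (∑ i : ι, L x i.1 * lam i) / S := by
      rw [Finset.sum_div]
      refine Finset.sum_congr rfl fun i _ => ?_
      simp only [hw, smul_eq_mul]
      ring
    rw [hsum, le_div_iff₀ hSpos]
    calc c * S = S * c := mul_comm c S
      _ ≤ _ := h2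
  exact h3.trans hj

/-- Ky Fan type minimax for a convex-concave continuous function,
with values in `EReal` (the common value may be `+∞`). -/
theorem kyfan_minimax {E F : Type*} [AddCommGroup E] [Module ℝ E] [TopologicalSpace E]
    [AddCommGroup F] [Module ℝ F] [TopologicalSpace F]
    (X : Set E) (Y : Set F) (hXc : IsCompact X) (hX : Convex ℝ X) (hXne : X.Nonempty)
    (hY : Convex ℝ Y) (hYne : Y.Nonempty) (L : E → F → ℝ)
    (hcont : ContinuousOn (fun p : E × F => L p.1 p.2) (X ×ˢ Y))
    (hconv : ∀ y ∈ Y, ConvexOn ℝ X (fun x => L x y))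
    (hconc : ∀ x ∈ X, ConcaveOn ℝ Y (fun y => L x y)) :
    (⨅ x : X, ⨆ y : Y, (L x y : EReal)) = ⨆ y : Y, ⨅ x : X, (L x y : EReal) := by
  classical
  refine le_antisymm ?_ (iSup_iInf_le_iInf_iSup fun (y : Y) (x : X) => (L x y : EReal))
  set β : EReal := ⨆ y : Y, ⨅ x : X, (L x y : EReal) with hβ
  have key : ∀ c : ℝ, β < (c : EReal) → (⨅ x : X, ⨆ y : Y, (L x y : EReal)) ≤ (c : EReal) := by
    intro c hc
    haveI : CompactSpace ↥X := isCompact_iff_compactSpace.mp hXc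
    set Z : ↥Y → Set ↥X := fun y => {x : ↥X | L x y.1 ≤ c} with hZ
    have hZclosed : ∀ y : ↥Y, IsClosed (Z y) := by
      intro y
      have hcx : ContinuousOn (fun x : E => L x y.1) X := by
        have : (fun x : E => L x y.1) = (fun p : E × F => L p.1 p.2) ∘ (fun x => (x, y.1)) :=
          rfl
        rw [this]
        exact hcont.comp ((continuous_id.prodMk continuous_const).continuousOn)
          (fun x hx => ⟨hx, y.2⟩)
      exact IsClosed.preimage hcx.restrict isClosed_Iic
    have hne : (⋂ y : ↥Y, Z y).Nonempty := by
      by_contra hempty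
      rw [Set.not_nonempty_iff_eq_empty] at hempty
      obtain ⟨t, ht⟩ := isCompact_univ.elim_finite_subfamily_closed Z hZclosed
        (by rw [Set.univ_inter]; exact hempty)
      rw [Set.univ_inter] at ht
      have Hfin : ∀ x ∈ X, ∃ y ∈ t.image Subtype.val, c < L x y := by
        intro x hx
        have hnx : (⟨x, hx⟩ : ↥X) ∉ ⋂ y ∈ t, Z y := by
          intro hmem
          have h0 : (⟨x, hx⟩ : ↥X) ∈ (⋂ y ∈ t, Z y) := hmem
          rw [ht] at h0
          exact h0
        simp only [Set.mem_iInter, not_forall] at hnx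
        obtain ⟨y, hyt, hny⟩ := hnx
        exact ⟨y.1, Finset.mem_image_of_mem _ hyt, by
          simpa [hZ, not_le] using hny⟩
      obtain ⟨ystar, hystarY, hystar⟩ := kyfan_finite X Y hX hXne hY L hconv hconc
        (t.image Subtype.val)
        (fun y hy => by obtain ⟨y', _, rfl⟩ := Finset.mem_image.mp hy; exact y'.2) c Hfin
      have h1 : (c : EReal) ≤ ⨅ x : X, (L x ystar : EReal) :=
        le_iInf fun x => EReal.coe_le_coe_iff.mpr (hystar x x.2)
      have h2 : (⨅ x : X, (L x ystar : EReal)) ≤ β :=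
        le_iSup (fun y : Y => ⨅ x : X, (L x y.1 : EReal)) ⟨ystar, hystarY⟩
      exact ((h1.trans h2).trans_lt hc).false
    obtain ⟨xstar, hxstar⟩ := hne
    refine iInf_le_of_le xstar (iSup_le fun y => ?_)
    exact EReal.coe_le_coe_iff.mpr (Set.mem_iInter.mp hxstar y)
  rcases le_or_gt (⨅ x : X, ⨆ y : Y, (L x y : EReal)) β with h | h
  · exact h
  · obtain ⟨c, hc1, hc2⟩ := EReal.lt_iff_exists_real_btwn.mp h
    exact absurd ((key c hc1).trans_lt hc2) (lt_irrefl _)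
end
end
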